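/- Let b ≥ 2 be an integer, d_0 ≥ 1 and d_1 ≥ 1 integers, and a/d_1 ∈ [0,1) a rational number with gcd(a, d_1) = 1 and gcd(b, d_1) = 1. If (1/d_0)·T_b^{i_1}(a/d_1) + j_1/d_0 = (1/d_0)·T_b^{i_2}(a/d_1) + j_2/d_0 for some integers 0 ≤ i_1, i_2 ≤ ord(b,d_1) − 1 and 0 ≤ j_1, j_2 ≤ d_0 − 1, then i_1 = i_2 and j_1 = j_2. Consequently, the set {(1/d_0)·T_b^i(a/d_1) + j/d_0 : 0 ≤ i ≤ ord(b,d_1) − 1, 0 ≤ j ≤ d_0 − 1} has exactly d_0 · ord(b,d_1) elements. -/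

import Mathlib

/-- The map `T_b : x ↦ bx (mod 1)`, i.e. the fractional part of `bx`. -/
noncomputable def Tb (b : ℕ) (x : ℝ) : ℝ := Int.fract ((b : ℝ) * x)

/-- `ordb b L` is the multiplicative order of `b` modulo `L`. -/
noncomputable def ordb (b L : ℕ) : ℕ := orderOf (b : ZMod L)

lemma Tb_iter (b d1 a : ℕ) (hd1 : 0 < d1) (h01 : a < d1) (i : ℕ) :
    (Tb b)^[i] ((a : ℝ) / d1) = ((b ^ i * a % d1 : ℕ) : ℝ) / d1 := by
  induction i with
  | zero => simp [Nat.mod_eq_of_lt h01]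
  | succ i ih =>
    rw [Function.iterate_succ_apply', ih, Tb]
    have h1 : (b : ℝ) * (((b ^ i * a % d1 : ℕ) : ℝ) / d1)
        = ((b * (b ^ i * a % d1) : ℕ) : ℝ) / d1 := by push_cast; ring
    rw [h1, Int.fract_div_natCast_eq_div_natCast_mod]
    congr 1
    rw [Nat.mul_mod, Nat.mod_mod_of_dvd _ dvd_rfl, ← Nat.mul_mod]
    rw [pow_succ, mul_comm (b^i) b, mul_assoc]

theorem stmt9 (b : ℕ) (hb : 2 ≤ b) (d0 d1 : ℕ) (hd0 : 1 ≤ d0) (hd1 : 1 ≤ d1)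
    (a : ℕ) (had : Nat.Coprime a d1) (hbd : Nat.Coprime b d1) (h01 : a < d1) :
    (∀ i₁ i₂ j₁ j₂ : ℕ, i₁ ≤ ordb b d1 - 1 → i₂ ≤ ordb b d1 - 1 →
        j₁ ≤ d0 - 1 → j₂ ≤ d0 - 1 →
        (1 / (d0 : ℝ)) * (Tb b)^[i₁] ((a : ℝ) / d1) + (j₁ : ℝ) / d0 =
          (1 / (d0 : ℝ)) * (Tb b)^[i₂] ((a : ℝ) / d1) + (j₂ : ℝ) / d0 →
        i₁ = i₂ ∧ j₁ = j₂) ∧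
      {x : ℝ | ∃ i < ordb b d1, ∃ j < d0,
          x = (1 / (d0 : ℝ)) * (Tb b)^[i] ((a : ℝ) / d1) + (j : ℝ) / d0}.ncard =
        d0 * ordb b d1 := by
  have hd1pos : 0 < d1 := hd1
  haveI : NeZero d1 := ⟨hd1pos.ne'⟩
  have hd1R : (0 : ℝ) < d1 := by exact_mod_cast hd1pos
  have hd0R : (0 : ℝ) < d0 := by exact_mod_cast hd0
  set u : (ZMod d1)ˣ := ZMod.unitOfCoprime b hbd with hu
  have hub : (u : ZMod d1) = (b : ZMod d1) := rfl
  have hord : ordb b d1 = orderOf u := by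
    rw [ordb, ← hub, orderOf_units]
  have hordpos : 0 < ordb b d1 := by
    rw [hord]; exact orderOf_pos u
  -- key injectivity
  have key : ∀ i₁ i₂ j₁ j₂ : ℕ, i₁ < ordb b d1 → i₂ < ordb b d1 →
      j₁ < d0 → j₂ < d0 →
      (1 / (d0 : ℝ)) * (Tb b)^[i₁] ((a : ℝ) / d1) + (j₁ : ℝ) / d0 =
        (1 / (d0 : ℝ)) * (Tb b)^[i₂] ((a : ℝ) / d1) + (j₂ : ℝ) / d0 →
      i₁ = i₂ ∧ j₁ = j₂ := by
    intro i₁ i₂ j₁ j₂ hi₁ hi₂ hj₁ hj₂ heq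
    rw [Tb_iter b d1 a hd1pos h01, Tb_iter b d1 a hd1pos h01] at heq
    set m₁ := b ^ i₁ * a % d1 with hm₁
    set m₂ := b ^ i₂ * a % d1 with hm₂
    have hm₁lt : m₁ < d1 := Nat.mod_lt _ hd1pos
    have hm₂lt : m₂ < d1 := Nat.mod_lt _ hd1pos
    have h3 : (d0 : ℝ) * ((m₁ : ℝ) + (j₁ : ℝ) * d1) = (d0 : ℝ) * ((m₂ : ℝ) + (j₂ : ℝ) * d1) := by
      field_simp at heq
      linear_combination (d0 : ℝ) * heq
    have h4 : (m₁ : ℝ) + (j₁ : ℝ) * d1 = (m₂ : ℝ) + (j₂ : ℝ) * d1 :=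
      mul_left_cancel₀ hd0R.ne' h3
    have hnat : m₁ + j₁ * d1 = m₂ + j₂ * d1 := by exact_mod_cast h4
    have hm : m₁ = m₂ := by
      have := congrArg (· % d1) hnat
      simpa [Nat.add_mul_mod_self_right, Nat.mod_eq_of_lt hm₁lt, Nat.mod_eq_of_lt hm₂lt] using this
    have hj : j₁ = j₂ := by
      rw [hm] at hnat
      exact Nat.eq_of_mul_eq_mul_right hd1pos (Nat.add_left_cancel hnat)
    refine ⟨?_, hj⟩
    -- from m₁ = m₂ deduce i₁ = i₂
    have hz : (b : ZMod d1) ^ i₁ * (a : ZMod d1) = (b : ZMod d1) ^ i₂ * (a : ZMod d1) := by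
      have h1 : ((b ^ i₁ * a : ℕ) : ZMod d1) = ((b ^ i₂ * a : ℕ) : ZMod d1) := by
        rw [ZMod.natCast_eq_natCast_iff']
        exact hm
      push_cast at h1
      exact h1
    have hau : IsUnit (a : ZMod d1) := (ZMod.unitOfCoprime a had).isUnit
    have hz2 : (b : ZMod d1) ^ i₁ = (b : ZMod d1) ^ i₂ :=
      hau.mul_left_cancel (by rw [mul_comm, hz, mul_comm])
    have huz : u ^ i₁ = u ^ i₂ := by
      apply Units.ext
      push_cast [hub]
      exact hz2
    rw [hord] at hi₁ hi₂
    exact pow_injOn_Iio_orderOf hi₁ hi₂ huz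
  constructor
  · intro i₁ i₂ j₁ j₂ hi₁ hi₂ hj₁ hj₂ heq
    exact key i₁ i₂ j₁ j₂ (by omega) (by omega) (by omega) (by omega) heq
  · have hset : {x : ℝ | ∃ i < ordb b d1, ∃ j < d0,
          x = (1 / (d0 : ℝ)) * (Tb b)^[i] ((a : ℝ) / d1) + (j : ℝ) / d0}
        = ↑((Finset.range (ordb b d1) ×ˢ Finset.range d0).image
            (fun p => (1 / (d0 : ℝ)) * (Tb b)^[p.1] ((a : ℝ) / d1) + (p.2 : ℝ) / d0)) := by
      ext x
      simp only [Set.mem_setOf_eq, Finset.coe_image, Set.mem_image, Finset.mem_coe,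
        Finset.mem_product, Finset.mem_range]
      constructor
      · rintro ⟨i, hi, j, hj, rfl⟩
        exact ⟨(i, j), ⟨hi, hj⟩, rfl⟩
      · rintro ⟨⟨i, j⟩, ⟨hi, hj⟩, rfl⟩
        exact ⟨i, hi, j, hj, rfl⟩
    rw [hset, Set.ncard_coe_finset, Finset.card_image_of_injOn, Finset.card_product,
      Finset.card_range, Finset.card_range, Nat.mul_comm]
    rintro ⟨i₁, j₁⟩ h1 ⟨i₂, j₂⟩ h2 heq
    simp only [Finset.coe_product, Set.mem_prod, Finset.mem_coe, Finset.mem_range] at h1 h2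
    obtain ⟨hi, hj⟩ := key i₁ i₂ j₁ j₂ h1.1 h2.1 h1.2 h2.2 heq
    simp [hi, hj]
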